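/- For every n ≥ 1, the group of symmetries of the unit hypercube [0,1]^n (all surjective isometries φ of Euclidean ℝ^n with φ([0,1]^n) = [0,1]^n, under composition) is isomorphic as a group to the automorphism group of the hypercube graph Q_n, the simple graph on vertex set {0,1}^n in which two vertices are adjacent if and only if they differ in exactly one coordinate. -/

import Mathlib

/-- The unit hypercube `[0,1]ⁿ ⊆ ℝⁿ`. -/
def unitCube (n : ℕ) : Set (EuclideanSpace ℝ (Fin n)) :=
  {x | ∀ i, x i ∈ Set.Icc (0 : ℝ) 1}

/-- The vertex set `{0,1}ⁿ ⊆ ℝⁿ` of the unit hypercube. -/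
def cubeVerts (n : ℕ) : Set (EuclideanSpace ℝ (Fin n)) :=
  {x | ∀ i, x i = 0 ∨ x i = 1}

/-- The hypercube graph `Qₙ`: vertices `{0,1}ⁿ`, two vertices being adjacent iff
they differ in exactly one coordinate. -/
def cubeGraph (n : ℕ) : SimpleGraph (cubeVerts n) where
  Adj v w := (Finset.univ.filter fun i => v.1 i ≠ w.1 i).card = 1
  symm := by
    refine ⟨fun v w h => ?_⟩
    beta_reduce at h ⊢
    have : (Finset.univ.filter fun i => w.1 i ≠ v.1 i)
        = (Finset.univ.filter fun i => v.1 i ≠ w.1 i) := by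
      ext i; simp [ne_comm]
    rw [this]; exact h
  loopless := by refine ⟨fun v h => ?_⟩; simp at h

/-- The group of symmetries of `A ⊆ ℝⁿ`: all (bijective) isometries of Euclidean
`ℝⁿ` mapping `A` onto `A`, as a subgroup of the isometry group of `ℝⁿ`. -/
noncomputable def symGroup (n : ℕ) (A : Set (EuclideanSpace ℝ (Fin n))) :
    Subgroup (EuclideanSpace ℝ (Fin n) ≃ᵢ EuclideanSpace ℝ (Fin n)) where
  carrier := {φ | φ '' A = A}
  one_mem' := by simp
  mul_mem' := by
    intro a b ha hb
    show ⇑(a * b) '' A = A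
    rw [show ⇑(a * b) = ⇑a ∘ ⇑b from rfl, Set.image_comp]
    rw [Set.mem_setOf_eq] at ha hb
    rw [hb, ha]
  inv_mem' := by
    intro a ha
    rw [Set.mem_setOf_eq] at ha ⊢
    conv_lhs => rw [← ha, ← Set.image_comp]
    simp

/-- The automorphism group of a simple graph: all permutations of the vertex set
preserving adjacency and nonadjacency, as a subgroup of the permutation group. -/
def autGroup {V : Type*} (G : SimpleGraph V) : Subgroup (Equiv.Perm V) where
  carrier := {π | ∀ v w, G.Adj (π v) (π w) ↔ G.Adj v w}
  one_mem' := by intro v w; rfl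
  mul_mem' := by
    intro a b ha hb v w
    simpa [Equiv.Perm.mul_apply] using (ha (b v) (b w)).trans (hb v w)
  inv_mem' := by
    intro a ha v w
    simpa using (ha (a⁻¹ v) (a⁻¹ w)).symm


namespace CubeWork
variable {n : ℕ}

abbrev E (n : ℕ) := EuclideanSpace ℝ (Fin n)

/-- sum of squared coordinate differences -/
noncomputable def S (x y : E n) : ℝ := ∑ i, (x i - y i)^2

lemma dist_sq (x y : E n) : dist x y ^ 2 = S x y := by
  rw [EuclideanSpace.dist_eq]
  rw [Real.sq_sqrt (by positivity)]
  unfold S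
  congr 1; ext i; rw [Real.dist_eq, sq_abs]

lemma S_eq_of_dist_eq {x y x' y' : E n} (h : dist x y = dist x' y') : S x y = S x' y' := by
  rw [← dist_sq, ← dist_sq, h]

lemma vert_mem_cube {v : E n} (hv : v ∈ cubeVerts n) : v ∈ unitCube n := by
  intro i
  rcases hv i with h | h <;> rw [h] <;> constructor <;> norm_num

/-- the "hamming distance" between points -/
noncomputable def hd (v w : E n) : ℕ := (Finset.univ.filter fun i => v i ≠ w i).card

lemma S_verts {v w : E n} (hv : v ∈ cubeVerts n) (hw : w ∈ cubeVerts n) :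
    S v w = (hd v w : ℝ) := by
  unfold S hd
  rw [Finset.card_filter, Nat.cast_sum]
  refine Finset.sum_congr rfl fun i _ => ?_
  rcases hv i with h1 | h1 <;> rcases hw i with h2 | h2 <;>
    simp [h1, h2] <;> norm_num

lemma sq_le_one {a b : ℝ} (ha : a ∈ Set.Icc (0:ℝ) 1) (hb : b ∈ Set.Icc (0:ℝ) 1) :
    (a - b)^2 ≤ 1 := by
  obtain ⟨ha0, ha1⟩ := ha; obtain ⟨hb0, hb1⟩ := hb; nlinarith

lemma vertex_of_S_ge {p q : E n} (hp : p ∈ unitCube n) (hq : q ∈ unitCube n)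
    (h : (n : ℝ) ≤ S p q) : p ∈ cubeVerts n := by
  have hall : ∀ i, (p i - q i)^2 = 1 := by
    by_contra hc
    push_neg at hc
    obtain ⟨i, hi⟩ := hc
    have hlt : S p q < ∑ _i : Fin n, (1:ℝ) := by
      refine Finset.sum_lt_sum (fun j _ => sq_le_one (hp j) (hq j)) ⟨i, Finset.mem_univ i, ?_⟩
      exact lt_of_le_of_ne (sq_le_one (hp i) (hq i)) hi
    rw [Finset.sum_const, Finset.card_univ, Fintype.card_fin, nsmul_eq_mul, mul_one] at hlt
    linarith
  intro i
  have h1 := hall i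
  obtain ⟨hp0, hp1⟩ := hp i; obtain ⟨hq0, hq1⟩ := hq i
  have h2 : (p i - q i - 1) * (p i - q i + 1) = 0 := by nlinarith
  rcases mul_eq_zero.mp h2 with h | h
  · right; linarith
  · left; linarith

/-- an isometry preserving the cube maps vertices to vertices -/
lemma sym_maps_verts (φ : E n ≃ᵢ E n) (hφ : ⇑φ '' unitCube n = unitCube n)
    {v : E n} (hv : v ∈ cubeVerts n) : φ v ∈ cubeVerts n := by
  classical
  set u : E n := WithLp.toLp 2 (fun i => 1 - v i) with hu
  have hu_vert : u ∈ cubeVerts n := by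
    intro i; rcases hv i with h | h <;> simp [hu, h]
  have hφv : φ v ∈ unitCube n := by
    rw [← hφ]; exact ⟨v, vert_mem_cube hv, rfl⟩
  have hφu : φ u ∈ unitCube n := by
    rw [← hφ]; exact ⟨u, vert_mem_cube hu_vert, rfl⟩
  have hSvu : S v u = (n : ℝ) := by
    unfold S
    have : ∀ i, (v i - u i)^2 = 1 := by
      intro i; rcases hv i with h | h <;> simp [hu, h] <;> norm_num
    simp [this]
  refine vertex_of_S_ge hφv hφu ?_
  rw [S_eq_of_dist_eq (φ.dist_eq v u), hSvu]


lemma adj_iff_S {v w : cubeVerts n} : (cubeGraph n).Adj v w ↔ S v.1 w.1 = 1 := by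
  show (Finset.univ.filter fun i => v.1 i ≠ w.1 i).card = 1 ↔ _
  rw [S_verts v.2 w.2]
  unfold hd
  exact_mod_cast Iff.rfl

lemma symGroup_image {φ : E n ≃ᵢ E n} (h : φ ∈ symGroup n (unitCube n)) :
    ⇑φ '' unitCube n = unitCube n := h

noncomputable def vertPerm (φ : E n ≃ᵢ E n) (hφ : φ ∈ symGroup n (unitCube n)) :
    Equiv.Perm (cubeVerts n) where
  toFun v := ⟨φ v.1, sym_maps_verts φ (symGroup_image hφ) v.2⟩
  invFun v := ⟨φ.symm v.1, sym_maps_verts φ.symm (symGroup_image (inv_mem hφ)) v.2⟩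
  left_inv v := by ext : 1; simp
  right_inv v := by ext : 1; simp

lemma vertPerm_mem (φ : E n ≃ᵢ E n) (hφ : φ ∈ symGroup n (unitCube n)) :
    vertPerm φ hφ ∈ autGroup (cubeGraph n) := by
  intro v w
  rw [adj_iff_S, adj_iff_S]
  show S (φ v.1) (φ w.1) = 1 ↔ _
  rw [S_eq_of_dist_eq (φ.dist_eq v.1 w.1)]

noncomputable def Φ : (symGroup n (unitCube n)) →* autGroup (cubeGraph n) :=
  MonoidHom.mk' (fun φ => ⟨vertPerm φ.1 φ.2, vertPerm_mem φ.1 φ.2⟩)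
    (by
      intro a b
      ext v : 3
      rfl)

lemma zero_vert : (0 : E n) ∈ cubeVerts n := fun _ => Or.inl rfl

lemma single_vert (i : Fin n) : (EuclideanSpace.single i (1:ℝ)) ∈ cubeVerts n := by
  intro j
  rw [EuclideanSpace.single_apply]
  by_cases h : j = i <;> simp [h]

lemma Φ_injective : Function.Injective (Φ (n := n)) := by
  rw [injective_iff_map_eq_one]
  intro φ hφ1
  have hfix : ∀ v : cubeVerts n, φ.1 v.1 = v.1 := by
    intro v
    have := congrArg (fun (π : autGroup (cubeGraph n)) => (π.1 v).1) hφ1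
    exact this
  have h0 : φ.1 0 = 0 := hfix ⟨0, zero_vert⟩
  set L := φ.1.toRealLinearIsometryEquivOfMapZero h0 with hL
  have hcoe : ⇑L = ⇑φ.1 := IsometryEquiv.coe_toRealLinearIsometryEquivOfMapZero _ _
  have hid : (L : E n →ₗ[ℝ] E n) = LinearMap.id := by
    refine Module.Basis.ext (EuclideanSpace.basisFun (Fin n) ℝ).toBasis ?_
    intro i
    have : φ.1 (EuclideanSpace.single i (1:ℝ)) = EuclideanSpace.single i (1:ℝ) :=
      hfix ⟨_, single_vert i⟩
    simp only [LinearMap.id_coe, id_eq]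
    show L _ = _
    rw [hcoe]
    simpa using this
  ext x : 2
  show φ.1 x = x
  rw [← hcoe]
  have := congrArg (fun (f : E n →ₗ[ℝ] E n) => f x) hid
  simpa using this

/-- The isometry of `ℝⁿ` given by permuting coordinates by `σ` and reflecting
(`x ↦ 1 - x`) the coordinates where `c` is true. -/
noncomputable def cubeIso (σ : Equiv.Perm (Fin n)) (c : Fin n → Bool) : E n ≃ᵢ E n where
  toFun x := WithLp.toLp 2 (fun i => if c i then 1 - x (σ.symm i) else x (σ.symm i))
  invFun y := WithLp.toLp 2 (fun j => if c (σ j) then 1 - y (σ j) else y (σ j))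
  left_inv x := by
    refine (WithLp.ext_iff 2).mpr (funext fun j => ?_)
    show (if c (σ j) then 1 - (if c (σ j) then 1 - x (σ.symm (σ j)) else x (σ.symm (σ j)))
      else (if c (σ j) then 1 - x (σ.symm (σ j)) else x (σ.symm (σ j)))) = x j
    rw [σ.symm_apply_apply]
    by_cases h : c (σ j) <;> simp [h]
  right_inv y := by
    refine (WithLp.ext_iff 2).mpr (funext fun i => ?_)
    show (if c i then 1 - (if c (σ (σ.symm i)) then 1 - y (σ (σ.symm i)) else y (σ (σ.symm i)))
      else (if c (σ (σ.symm i)) then 1 - y (σ (σ.symm i)) else y (σ (σ.symm i)))) = y i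
    rw [σ.apply_symm_apply]
    by_cases h : c i <;> simp [h]
  isometry_toFun := by
    refine Isometry.of_dist_eq fun x y => ?_
    rw [EuclideanSpace.dist_eq, EuclideanSpace.dist_eq]
    congr 1
    rw [← Equiv.sum_comp σ.symm (fun j => dist (x j) (y j) ^ 2)]
    refine Finset.sum_congr rfl fun i _ => ?_
    show dist (if c i then 1 - x (σ.symm i) else x (σ.symm i))
        (if c i then 1 - y (σ.symm i) else y (σ.symm i)) ^ 2
      = dist (x (σ.symm i)) (y (σ.symm i)) ^ 2
    by_cases h : c i
    · rw [if_pos h, if_pos h, Real.dist_eq, Real.dist_eq,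
        show (1 - x (σ.symm i)) - (1 - y (σ.symm i)) = -(x (σ.symm i) - y (σ.symm i)) by ring,
        abs_neg]
    · rw [if_neg h, if_neg h]

lemma cubeIso_maps_cube (σ : Equiv.Perm (Fin n)) (c : Fin n → Bool)
    {x : E n} (hx : x ∈ unitCube n) : cubeIso σ c x ∈ unitCube n := by
  intro i
  show (if c i then 1 - x (σ.symm i) else x (σ.symm i)) ∈ Set.Icc (0:ℝ) 1
  obtain ⟨h0, h1⟩ := hx (σ.symm i)
  by_cases h : c i <;> simp [h] <;> constructor <;> linarith

lemma cubeIso_symm_maps_cube (σ : Equiv.Perm (Fin n)) (c : Fin n → Bool)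
    {y : E n} (hy : y ∈ unitCube n) : (cubeIso σ c).symm y ∈ unitCube n := by
  intro j
  show (if c (σ j) then 1 - y (σ j) else y (σ j)) ∈ Set.Icc (0:ℝ) 1
  obtain ⟨h0, h1⟩ := hy (σ j)
  by_cases h : c (σ j) <;> simp [h] <;> constructor <;> linarith

lemma cubeIso_mem (σ : Equiv.Perm (Fin n)) (c : Fin n → Bool) :
    cubeIso σ c ∈ symGroup n (unitCube n) := by
  show ⇑(cubeIso σ c) '' unitCube n = unitCube n
  apply Set.Subset.antisymm
  · rintro y ⟨x, hx, rfl⟩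
    exact cubeIso_maps_cube σ c hx
  · intro y hy
    exact ⟨(cubeIso σ c).symm y, cubeIso_symm_maps_cube σ c hy,
      (cubeIso σ c).apply_symm_apply y⟩

/-! ### Combinatorics of the hypercube graph -/

/-- The set of coordinates where two vertices differ. -/
noncomputable def D (v w : cubeVerts n) : Finset (Fin n) :=
  Finset.univ.filter fun i => v.1 i ≠ w.1 i

lemma adjD {v w : cubeVerts n} (h : (cubeGraph n).Adj v w) : (D v w).card = 1 := h

lemma adj_of_D {v w : cubeVerts n} (h : (D v w).card = 1) : (cubeGraph n).Adj v w := h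

lemma mem_D {v w : cubeVerts n} {i : Fin n} : i ∈ D v w ↔ v.1 i ≠ w.1 i := by
  simp [D]

lemma vert_ext {v w : cubeVerts n} (h : ∀ i, v.1 i = w.1 i) : v = w :=
  Subtype.ext ((WithLp.ext_iff 2).mpr (funext h))

lemma eq_of_ne_binary {a b c : ℝ} (ha : a = 0 ∨ a = 1) (hb : b = 0 ∨ b = 1)
    (hc : c = 0 ∨ c = 1) (hab : a ≠ b) (hac : a ≠ c) : b = c := by
  rcases ha with h|h <;> rcases hb with h'|h' <;> rcases hc with h''|h'' <;> simp_all

lemma D_subset_union (u v w : cubeVerts n) : D u v ⊆ D u w ∪ D w v := by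
  intro i hi
  rw [mem_D] at hi
  rw [Finset.mem_union, mem_D, mem_D]
  by_contra hc
  push_neg at hc
  exact hi (hc.1.trans hc.2)

lemma common_det {u w w' : cubeVerts n} (hw : (cubeGraph n).Adj u w)
    (hw' : (cubeGraph n).Adj u w') (hD : D u w = D u w') : w = w' := by
  refine vert_ext fun i => ?_
  by_cases hi : i ∈ D u w
  · have hi' : i ∈ D u w' := hD ▸ hi
    rw [mem_D] at hi hi'
    exact eq_of_ne_binary (u.2 i) (w.2 i) (w'.2 i) hi hi'
  · have hi2 : i ∉ D u w' := hD ▸ hi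
    rw [mem_D, not_ne_iff] at hi hi2
    exact hi.symm.trans hi2

lemma D_adj_subset {u v w : cubeVerts n} (huv : (D u v).card = 2)
    (h1 : (cubeGraph n).Adj u w) (h2 : (cubeGraph n).Adj w v) : D u w ⊆ D u v := by
  have hsub := D_subset_union u v w
  have hcard : (D u w ∪ D w v).card ≤ 2 := by
    refine le_trans (Finset.card_union_le _ _) ?_
    rw [adjD h1, adjD h2]
  have heq := Finset.eq_of_subset_of_card_le hsub (by rw [huv]; exact hcard)
  rw [heq]
  exact Finset.subset_union_left

lemma common_nbrs {u v w₁ w₂ w₃ : cubeVerts n} (huv : (D u v).card = 2)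
    (h1u : (cubeGraph n).Adj u w₁) (h1v : (cubeGraph n).Adj w₁ v)
    (h2u : (cubeGraph n).Adj u w₂) (h2v : (cubeGraph n).Adj w₂ v)
    (h3u : (cubeGraph n).Adj u w₃) (h3v : (cubeGraph n).Adj w₃ v)
    (h12 : w₁ ≠ w₂) : w₃ = w₁ ∨ w₃ = w₂ := by
  obtain ⟨a₁, ha₁⟩ := Finset.card_eq_one.mp (adjD h1u)
  obtain ⟨a₂, ha₂⟩ := Finset.card_eq_one.mp (adjD h2u)
  obtain ⟨a₃, ha₃⟩ := Finset.card_eq_one.mp (adjD h3u)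
  have hne : a₁ ≠ a₂ := by
    rintro rfl
    exact h12 (common_det h1u h2u (by rw [ha₁, ha₂]))
  have hm1 : a₁ ∈ D u v := D_adj_subset huv h1u h1v (ha₁ ▸ Finset.mem_singleton_self a₁)
  have hm2 : a₂ ∈ D u v := D_adj_subset huv h2u h2v (ha₂ ▸ Finset.mem_singleton_self a₂)
  have hm3 : a₃ ∈ D u v := D_adj_subset huv h3u h3v (ha₃ ▸ Finset.mem_singleton_self a₃)
  have hDuv : ({a₁, a₂} : Finset (Fin n)) = D u v := by
    refine Finset.eq_of_subset_of_card_le ?_ ?_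
    · intro i hi
      rcases Finset.mem_insert.mp hi with rfl | hi
      · exact hm1
      · rw [Finset.mem_singleton] at hi; subst hi; exact hm2
    · rw [huv, Finset.card_pair hne]
  rw [← hDuv] at hm3
  rcases Finset.mem_insert.mp hm3 with rfl | hm3
  · exact Or.inl (common_det h3u h1u (by rw [ha₃, ha₁]))
  · rw [Finset.mem_singleton] at hm3; subst hm3
    exact Or.inr (common_det h3u h2u (by rw [ha₃, ha₂]))

/-- Reindexing a vertex by a permutation of coordinates. -/
noncomputable def Rv (σ : Equiv.Perm (Fin n)) (v : cubeVerts n) : cubeVerts n :=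
  ⟨WithLp.toLp 2 (fun i => v.1 (σ.symm i)), fun i => v.2 (σ.symm i)⟩

lemma Rv_apply (σ : Equiv.Perm (Fin n)) (v : cubeVerts n) (i : Fin n) :
    (Rv σ v).1 i = v.1 (σ.symm i) := rfl

lemma D_Rv (σ : Equiv.Perm (Fin n)) (u v : cubeVerts n) :
    D (Rv σ u) (Rv σ v) = (D u v).map σ.toEmbedding := by
  ext i
  rw [mem_D, Finset.mem_map_equiv, mem_D]
  exact Iff.rfl

lemma card_D_Rv (σ : Equiv.Perm (Fin n)) (u v : cubeVerts n) :
    (D (Rv σ u) (Rv σ v)).card = (D u v).card := by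
  rw [D_Rv, Finset.card_map]

lemma adj_Rv {σ : Equiv.Perm (Fin n)} {u v : cubeVerts n}
    (h : (cubeGraph n).Adj u v) : (cubeGraph n).Adj (Rv σ u) (Rv σ v) := by
  refine adj_of_D ?_
  rw [card_D_Rv]
  exact adjD h

lemma Rv_injective (σ : Equiv.Perm (Fin n)) : Function.Injective (Rv σ) := by
  intro u v h
  refine vert_ext fun i => ?_
  have h2 : u.1 (σ.symm (σ i)) = v.1 (σ.symm (σ i)) :=
    congrArg (fun w : cubeVerts n => w.1 (σ i)) h
  rwa [σ.symm_apply_apply] at h2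

/-- The zero vertex. -/
noncomputable def zeroV : cubeVerts n := ⟨0, zero_vert⟩

/-- The standard basis vertices. -/
noncomputable def eV (j : Fin n) : cubeVerts n := ⟨EuclideanSpace.single j 1, single_vert j⟩

lemma zeroV_apply (i : Fin n) : (zeroV (n := n)).1 i = 0 := rfl

lemma eV_apply (j i : Fin n) : (eV j).1 i = if i = j then 1 else 0 :=
  EuclideanSpace.single_apply j 1 i

lemma eV_injective : Function.Injective (eV (n := n)) := by
  intro j k h
  by_contra hjk
  have h1 : (eV j).1 j = (eV k).1 j := by rw [h]
  rw [eV_apply, eV_apply] at h1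
  simp [hjk] at h1

lemma Rv_zeroV (σ : Equiv.Perm (Fin n)) : Rv σ zeroV = zeroV :=
  vert_ext fun _ => rfl

lemma Rv_eV (σ : Equiv.Perm (Fin n)) (j : Fin n) : Rv σ (eV j) = eV (σ j) := by
  refine vert_ext fun i => ?_
  rw [Rv_apply, eV_apply, eV_apply]
  simp [Equiv.symm_apply_eq]

/-- The support of a vertex. -/
noncomputable def wtF (v : cubeVerts n) : Finset (Fin n) :=
  Finset.univ.filter fun i => v.1 i = 1

/-- The weight (number of 1 coordinates) of a vertex. -/
noncomputable def wt (v : cubeVerts n) : ℕ := (wtF v).card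

lemma mem_wtF {v : cubeVerts n} {i : Fin n} : i ∈ wtF v ↔ v.1 i = 1 := by
  simp [wtF]

lemma D_zero (v : cubeVerts n) : D zeroV v = wtF v := by
  ext i
  rw [mem_D, mem_wtF, zeroV_apply]
  rcases v.2 i with h | h <;> simp [h]

lemma wt_eq_zero {v : cubeVerts n} (h : wt v = 0) : v = zeroV := by
  rw [wt, Finset.card_eq_zero] at h
  refine vert_ext fun i => ?_
  rw [zeroV_apply]
  rcases v.2 i with h' | h'
  · exact h'
  · exact absurd (Finset.mem_filter.mpr ⟨Finset.mem_univ i, h'⟩)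
      (by rw [show (Finset.univ.filter fun i => v.1 i = 1) = wtF v from rfl, h]; exact
        Finset.notMem_empty i)

lemma wt_eq_one {v : cubeVerts n} (h : wt v = 1) : ∃ j, v = eV j := by
  obtain ⟨j, hj⟩ := Finset.card_eq_one.mp h
  refine ⟨j, vert_ext fun i => ?_⟩
  rw [eV_apply]
  by_cases hij : i = j
  · subst hij
    rw [if_pos rfl]
    exact mem_wtF.mp (hj ▸ Finset.mem_singleton_self i)
  · rw [if_neg hij]
    rcases v.2 i with h' | h'
    · exact h'
    · exact absurd (hj ▸ mem_wtF.mpr h') (by simp [hij])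

lemma wtF_eV (j : Fin n) : wtF (eV j) = {j} := by
  ext i
  rw [mem_wtF, eV_apply, Finset.mem_singleton]
  by_cases h : i = j <;> simp [h]

lemma D_eq_singleton {u w : cubeVerts n} {a : Fin n} (hne : u.1 a ≠ w.1 a)
    (heq : ∀ i, i ≠ a → u.1 i = w.1 i) : D u w = {a} := by
  ext i
  rw [mem_D, Finset.mem_singleton]
  constructor
  · intro h
    by_contra hia
    exact h (heq i hia)
  · rintro rfl; exact hne

lemma D_eq_pair {u w : cubeVerts n} {a b : Fin n} (hab : a ≠ b)
    (ha : u.1 a ≠ w.1 a) (hb : u.1 b ≠ w.1 b)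
    (heq : ∀ i, i ≠ a → i ≠ b → u.1 i = w.1 i) : D u w = {a, b} := by
  ext i
  rw [mem_D, Finset.mem_insert, Finset.mem_singleton]
  constructor
  · intro h
    by_contra hc
    push_neg at hc
    exact h (heq i hc.1 hc.2)
  · rintro (rfl | rfl)
    · exact ha
    · exact hb

/-- Setting one coordinate of a vertex to zero. -/
noncomputable def vdown (v : cubeVerts n) (a : Fin n) : cubeVerts n :=
  ⟨WithLp.toLp 2 (Function.update v.1 a 0), fun i => by
    rw [PiLp.toLp_apply]
    by_cases h : i = a
    · subst h
      rw [Function.update_self]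
      exact Or.inl rfl
    · rw [Function.update_of_ne h]
      exact v.2 i⟩

lemma vdown_same (v : cubeVerts n) (a : Fin n) : (vdown v a).1 a = 0 :=
  Function.update_self a 0 v.1

lemma vdown_ne (v : cubeVerts n) {a i : Fin n} (h : i ≠ a) : (vdown v a).1 i = v.1 i :=
  Function.update_of_ne h 0 v.1

lemma wt_vdown {v : cubeVerts n} {a : Fin n} (hva : v.1 a = 1) :
    wt v = wt (vdown v a) + 1 := by
  have hwtF : wtF (vdown v a) = (wtF v).erase a := by
    ext i
    rw [mem_wtF, Finset.mem_erase, mem_wtF]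
    by_cases h : i = a
    · subst h
      simp [vdown_same]
    · simp [vdown_ne v h, h]
  have hmem : a ∈ wtF v := mem_wtF.mpr hva
  have hpos : 1 ≤ (wtF v).card := Finset.card_pos.mpr ⟨a, hmem⟩
  rw [wt, wt, hwtF, Finset.card_erase_of_mem hmem]
  omega

lemma exists_sigma {π : Equiv.Perm (cubeVerts n)} (hπ : π ∈ autGroup (cubeGraph n))
    (h0 : π zeroV = zeroV) : ∃ σ : Equiv.Perm (Fin n), ∀ j, π (eV j) = eV (σ j) := by
  classical
  have him : ∀ j : Fin n, ∃ k, π (eV j) = eV k := by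
    intro j
    have hadj : (cubeGraph n).Adj zeroV (eV j) := by
      refine adj_of_D ?_
      rw [D_zero, wtF_eV]
      exact Finset.card_singleton j
    have hadj2 : (cubeGraph n).Adj zeroV (π (eV j)) := by
      have := (hπ zeroV (eV j)).mpr hadj
      rwa [h0] at this
    have hwt : wt (π (eV j)) = 1 := by
      have := adjD hadj2
      rwa [D_zero] at this
    exact wt_eq_one hwt
  choose f hf using him
  have hinj : Function.Injective f := by
    intro j k h
    have h2 : π (eV j) = π (eV k) := by rw [hf j, hf k, h]
    exact eV_injective (π.injective h2)
  exact ⟨Equiv.ofBijective f (Finite.injective_iff_bijective.mp hinj), fun j => hf j⟩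

lemma autFix {π : Equiv.Perm (cubeVerts n)} (hπ : π ∈ autGroup (cubeGraph n))
    (h0 : π zeroV = zeroV) {σ : Equiv.Perm (Fin n)}
    (hσ : ∀ j, π (eV j) = eV (σ j)) : ∀ v, π v = Rv σ v := by
  suffices H : ∀ k (v : cubeVerts n), wt v = k → π v = Rv σ v by
    intro v; exact H (wt v) v rfl
  intro k
  induction k using Nat.strong_induction_on with
  | _ k IH =>
    intro v hk
    match k, hk with
    | 0, hk =>
      rw [wt_eq_zero hk, h0, Rv_zeroV]
    | 1, hk =>
      obtain ⟨j, rfl⟩ := wt_eq_one hk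
      rw [hσ j, Rv_eV]
    | (m+2), hk =>
      -- pick two coordinates where v is 1
      have h2 : 1 < (wtF v).card := by
        rw [show (wtF v).card = wt v from rfl, hk]; omega
      obtain ⟨a, ha, b, hb, hab⟩ := Finset.one_lt_card.mp h2
      rw [mem_wtF] at ha hb
      set y := vdown v a with hy
      set y' := vdown v b with hy'
      have hyb : y.1 b = 1 := by rw [hy, vdown_ne v (Ne.symm hab)]; exact hb
      set z := vdown y b with hz
      -- coordinate values
      have hya : y.1 a = 0 := vdown_same v a
      have hy'b : y'.1 b = 0 := vdown_same v b
      have hy'a : y'.1 a = 1 := by rw [hy', vdown_ne v hab]; exact ha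
      have hza : z.1 a = 0 := by rw [hz, vdown_ne y hab]; exact hya
      have hzb : z.1 b = 0 := vdown_same y b
      -- generic coords
      have hyi : ∀ i, i ≠ a → y.1 i = v.1 i := fun i hi => vdown_ne v hi
      have hy'i : ∀ i, i ≠ b → y'.1 i = v.1 i := fun i hi => vdown_ne v hi
      have hzi : ∀ i, i ≠ a → i ≠ b → z.1 i = v.1 i := fun i hia hib =>
        (vdown_ne y hib).trans (vdown_ne v hia)
      -- adjacencies
      have hadj_yv : (cubeGraph n).Adj y v := adj_of_D (by
        rw [D_eq_singleton (a := a) (by rw [hya, ha]; norm_num)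
          (fun i hi => (hyi i hi))]
        exact Finset.card_singleton a)
      have hadj_vy' : (cubeGraph n).Adj v y' := adj_of_D (by
        rw [D_eq_singleton (a := b) (by rw [hy'b, hb]; norm_num)
          (fun i hi => (hy'i i hi).symm)]
        exact Finset.card_singleton b)
      have hadj_yz : (cubeGraph n).Adj y z := adj_of_D (by
        rw [D_eq_singleton (a := b) (by rw [hyb, hzb]; norm_num)
          (fun i hi => ((vdown_ne y hi)).symm)]
        exact Finset.card_singleton b)
      have hadj_zy' : (cubeGraph n).Adj z y' := adj_of_D (by
        rw [D_eq_singleton (a := a) (by rw [hza, hy'a]; norm_num)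
          (fun i hi => by
            by_cases hib : i = b
            · subst hib; rw [hzb, hy'b]
            · rw [hzi i hi hib, hy'i i hib])]
        exact Finset.card_singleton a)
      have hDyy' : (D y y').card = 2 := by
        rw [D_eq_pair hab (by rw [hya, hy'a]; norm_num) (by rw [hyb, hy'b]; norm_num)
          (fun i hia hib => by rw [hyi i hia, hy'i i hib])]
        exact Finset.card_pair hab
      have hvz : v ≠ z := by
        intro h
        rw [h] at ha
        rw [hza] at ha
        norm_num at ha
      -- weights
      have hwy : wt y = m + 1 := by
        have h3 := wt_vdown (v := v) (a := a) ha
        rw [← hy] at h3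
        omega
      have hwy' : wt y' = m + 1 := by
        have h3 := wt_vdown (v := v) (a := b) hb
        rw [← hy'] at h3
        omega
      have hwz : wt z = m := by
        have h3 := wt_vdown (v := y) (a := b) hyb
        rw [← hz] at h3
        omega
      -- induction hypotheses
      have hπy : π y = Rv σ y := IH (m+1) (by omega) y hwy
      have hπy' : π y' = Rv σ y' := IH (m+1) (by omega) y' hwy'
      have hπz : π z = Rv σ z := IH m (by omega) z hwz
      -- common neighbor setup
      have hcard2 : (D (Rv σ y) (Rv σ y')).card = 2 := by
        rw [card_D_Rv]; exact hDyy'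
      have hw1u : (cubeGraph n).Adj (Rv σ y) (Rv σ v) := adj_Rv hadj_yv
      have hw1v : (cubeGraph n).Adj (Rv σ v) (Rv σ y') := adj_Rv hadj_vy'
      have hw2u : (cubeGraph n).Adj (Rv σ y) (Rv σ z) := adj_Rv hadj_yz
      have hw2v : (cubeGraph n).Adj (Rv σ z) (Rv σ y') := adj_Rv hadj_zy'
      have h3u : (cubeGraph n).Adj (Rv σ y) (π v) := by
        rw [← hπy]; exact (hπ y v).mpr hadj_yv
      have h3v : (cubeGraph n).Adj (π v) (Rv σ y') := by
        rw [← hπy']; exact (hπ v y').mpr hadj_vy'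
      have hne12 : Rv σ v ≠ Rv σ z := fun h => hvz (Rv_injective σ h)
      rcases common_nbrs hcard2 hw1u hw1v hw2u hw2v h3u h3v hne12 with h | h
      · exact h
      · exfalso
        rw [← hπz] at h
        exact hvz (π.injective h)

lemma Φ_surjective : Function.Surjective (Φ (n := n)) := by
  classical
  intro π
  set c : Fin n → Bool := fun i => decide ((π.1 zeroV).1 i = 1) with hc
  set T : symGroup n (unitCube n) := ⟨cubeIso 1 c, cubeIso_mem 1 c⟩ with hT
  have hT0 : (Φ T).1 zeroV = π.1 zeroV := by
    refine vert_ext fun i => ?_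
    show (if c i then 1 - (zeroV (n := n)).1 ((1 : Equiv.Perm (Fin n)).symm i)
      else (zeroV (n := n)).1 ((1 : Equiv.Perm (Fin n)).symm i)) = (π.1 zeroV).1 i
    rw [zeroV_apply]
    by_cases hb : (π.1 zeroV).1 i = 1
    · have hci : c i = true := by rw [hc]; simp [hb]
      rw [hci, if_pos rfl, hb]
      norm_num
    · have hci : c i = false := by rw [hc]; simp [hb]
      rw [hci]
      norm_num
      rcases (π.1 zeroV).2 i with h | h
      · exact h.symm
      · exact absurd h hb
  set π' : autGroup (cubeGraph n) := (Φ T)⁻¹ * π with hπ'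
  have h0' : π'.1 zeroV = zeroV := by
    show ((Φ T).1)⁻¹ (π.1 zeroV) = zeroV
    rw [← hT0]
    exact Equiv.symm_apply_apply _ _
  obtain ⟨σ, hσ⟩ := exists_sigma π'.2 h0'
  have hfix := autFix π'.2 h0' hσ
  set P : symGroup n (unitCube n) := ⟨cubeIso σ (fun _ => false), cubeIso_mem _ _⟩ with hP
  have hPπ : Φ P = π' := by
    refine Subtype.ext (Equiv.ext fun v => ?_)
    rw [hfix v]
    refine vert_ext fun i => ?_
    show (if (false : Bool) then 1 - v.1 (σ.symm i) else v.1 (σ.symm i)) = (Rv σ v).1 i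
    rw [if_neg (by simp), Rv_apply]
  refine ⟨T * P, ?_⟩
  rw [map_mul, hPπ, hπ']
  exact mul_inv_cancel_left _ _

end CubeWork

/-- The group of symmetries of the unit hypercube `[0,1]ⁿ` is isomorphic to the
automorphism group of the hypercube graph `Qₙ`. -/
theorem symGroup_unitCube_iso_autGroup_cubeGraph (n : ℕ) (hn : 1 ≤ n) :
    Nonempty ((symGroup n (unitCube n)) ≃* autGroup (cubeGraph n)) := by
  exact ⟨MulEquiv.ofBijective CubeWork.Φ ⟨CubeWork.Φ_injective, CubeWork.Φ_surjective⟩⟩
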